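/- (Fact 2 of the paper.) For all formulas α and β of Φ_XY, the formula [α]β ↔ □(α → β) is valid. Moreover, there exist α ∈ Φ_XY and φ ∈ Φ_ConSHN-BT such that [α]φ ↔ □(α → φ) is not valid; concretely, with α = p and φ = □p, the formula [p]□p ↔ □(p → □p) is not valid. -/

import Mathlib

namespace ConSHN

/-- Formulas of the language Φ_XY, over atomic propositions indexed by ℕ. -/
inductive FXY : Type
  | atom : ℕ → FXY
  | bot  : FXY
  | neg  : FXY → FXY
  | conj : FXY → FXY → FXY
  | X    : FXY → FXY
  | Y    : FXY → FXY
  deriving DecidableEq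

/-- Formulas of the language Φ_ConSHN-BT. -/
inductive F : Type
  | atom : ℕ → F
  | bot  : F
  | neg  : F → F
  | conj : F → F → F
  | X    : F → F
  | Y    : F → F
  | con  : FXY → F → F
  deriving DecidableEq

namespace FXY

def top : FXY := neg bot
def imp (a b : FXY) : FXY := neg (conj a (neg b))
def or (a b : FXY) : FXY := neg (conj (neg a) (neg b))
def iff (a b : FXY) : FXY := conj (imp a b) (imp b a)

/-- n-fold application of X. -/
def Xn : ℕ → FXY → FXY
  | 0, a => a
  | n+1, a => X (Xn n a)

/-- n-fold application of Y. -/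
def Yn : ℕ → FXY → FXY
  | 0, a => a
  | n+1, a => Y (Yn n a)

/-- The embedding of Φ_XY into Φ_ConSHN-BT. -/
def toF : FXY → F
  | atom p => .atom p
  | bot => .bot
  | neg a => .neg (toF a)
  | conj a b => .conj (toF a) (toF b)
  | X a => .X (toF a)
  | Y a => .Y (toF a)

/-- Purely propositional formulas (no occurrence of X or Y). -/
inductive IsPL : FXY → Prop
  | atom (p : ℕ) : IsPL (atom p)
  | bot : IsPL bot
  | neg {a} : IsPL a → IsPL (neg a)
  | conj {a b} : IsPL a → IsPL b → IsPL (conj a b)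

/-- The language Φ_N-XY : β ::= Xⁿp | Xⁿ⊥ | Yⁿp | Yⁿ⊥ | ¬β | (β ∧ β). -/
inductive NXY : FXY → Prop
  | xatom (n p : ℕ) : NXY (Xn n (atom p))
  | xbot (n : ℕ) : NXY (Xn n bot)
  | yatom (n p : ℕ) : NXY (Yn n (atom p))
  | ybot (n : ℕ) : NXY (Yn n bot)
  | neg {a} : NXY a → NXY (neg a)
  | conj {a b} : NXY a → NXY b → NXY (conj a b)

end FXY

namespace F

def top : F := neg bot
def imp (a b : F) : F := neg (conj a (neg b))
def or (a b : F) : F := neg (conj (neg a) (neg b))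
def iff (a b : F) : F := conj (imp a b) (imp b a)

/-- ⟨α⟩φ := ¬[α]¬φ -/
def dcon (α : FXY) (φ : F) : F := neg (con α (neg φ))

/-- □φ := [⊤]φ -/
def box (φ : F) : F := con FXY.top φ

/-- ◇φ := ¬□¬φ -/
def dia (φ : F) : F := neg (box (neg φ))

/-- Closed formulas of Φ_ConSHN-BT : χ ::= [α]φ | ¬χ | (χ ∧ χ). -/
inductive Closed : F → Prop
  | con (α : FXY) (φ : F) : Closed (con α φ)
  | neg {χ} : Closed χ → Closed (neg χ)
  | conj {χ₁ χ₂} : Closed χ₁ → Closed χ₂ → Closed (conj χ₁ χ₂)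

/-- The language Φ_Con-XY : φ ::= Xⁿp | Xⁿ⊥ | Yⁿp | Yⁿ⊥ | ¬φ | (φ ∧ φ) | [β]φ, β ∈ Φ_N-XY. -/
inductive ConXY : F → Prop
  | xatom (n p : ℕ) : ConXY (FXY.Xn n (.atom p)).toF
  | xbot (n : ℕ) : ConXY (FXY.Xn n .bot).toF
  | yatom (n p : ℕ) : ConXY (FXY.Yn n (.atom p)).toF
  | ybot (n : ℕ) : ConXY (FXY.Yn n .bot).toF
  | neg {φ} : ConXY φ → ConXY (neg φ)
  | conj {φ ψ} : ConXY φ → ConXY ψ → ConXY (conj φ ψ)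
  | con {β : FXY} {φ} : β.NXY → ConXY φ → ConXY (con β φ)

/-- The language Φ_One□-XY : φ ::= β | ¬φ | (φ ∧ φ) | □β, β ∈ Φ_N-XY. -/
inductive OneBox : F → Prop
  | base {β : FXY} : β.NXY → OneBox β.toF
  | neg {φ} : OneBox φ → OneBox (neg φ)
  | conj {φ ψ} : OneBox φ → OneBox ψ → OneBox (conj φ ψ)
  | box {β : FXY} : β.NXY → OneBox (box β.toF)

end F

/-- A branching-time model. -/
structure Model where
  W : Type
  lt : W → W → Prop
  V : ℕ → Set W
  nonempty : Nonempty W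
  serial : ∀ w, ∃ v, lt w v
  root : W
  reach : ∀ w : W, ∃! l : List W,
    List.Chain' lt l ∧ l.head? = some root ∧ l.getLast? = some w

/-- The set TL(M) of timelines of the model M. -/
def Timeline (M : Model) : Set (ℕ → M.W) :=
  {π | π 0 = M.root ∧ ∀ i, M.lt (π i) (π (i + 1))}

/-- AT(C): the acceptable timelines by a context C (AT(∅) = TL(M)). -/
def AT (M : Model) (C : Set (Set (ℕ → M.W))) : Set (ℕ → M.W) :=
  Timeline M ∩ ⋂₀ C

/-- Truth of Φ_XY formulas at (M, π, i) (independent of contexts). -/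
def satXY (M : Model) (π : ℕ → M.W) : ℕ → FXY → Prop
  | i, .atom p => π i ∈ M.V p
  | _, .bot => False
  | i, .neg a => ¬ satXY M π i a
  | i, .conj a b => satXY M π i a ∧ satXY M π i b
  | i, .X a => satXY M π (i + 1) a
  | i, .Y a => 0 < i ∧ satXY M π (i - 1) a

/-- The indefeasible ontic rule ⟨⟨α⟩⟩_i generated by α at instant i. -/
def ruleOf (M : Model) (α : FXY) (i : ℕ) : Set (ℕ → M.W) :=
  {π | π ∈ Timeline M ∧ satXY M π i α}

/-- The update C + α@i of a context C with α at instant i. -/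
def upd (M : Model) (C : Set (Set (ℕ → M.W))) (α : FXY) (i : ℕ) :
    Set (Set (ℕ → M.W)) :=
  insert (ruleOf M α i) C

/-- Truth of Φ_ConSHN-BT formulas at (M, C, π, i). -/
def sat (M : Model) : Set (Set (ℕ → M.W)) → (ℕ → M.W) → ℕ → F → Prop
  | _, π, i, .atom p => π i ∈ M.V p
  | _, _, _, .bot => False
  | C, π, i, .neg φ => ¬ sat M C π i φ
  | C, π, i, .conj φ ψ => sat M C π i φ ∧ sat M C π i ψ
  | C, π, i, .X φ => sat M C π (i + 1) φ
  | C, π, i, .Y φ => 0 < i ∧ sat M C π (i - 1) φ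
  | C, π, i, .con α φ =>
      ∀ π' ∈ AT M (upd M C α i), sat M (upd M C α i) π' i φ

/-- C is a context for M: a finite set of sets of timelines. -/
def IsContext (M : Model) (C : Set (Set (ℕ → M.W))) : Prop :=
  C.Finite ∧ ∀ R ∈ C, R ⊆ Timeline M

/-- Validity: truth at every contextualized pointed model. -/
def Valid (φ : F) : Prop :=
  ∀ (M : Model) (C : Set (Set (ℕ → M.W))) (π : ℕ → M.W) (i : ℕ),
    IsContext M C → π ∈ AT M C → sat M C π i φ

/-- Satisfiability: truth at some contextualized pointed model. -/
def Satisfiable (φ : F) : Prop :=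
  ∃ (M : Model) (C : Set (Set (ℕ → M.W))) (π : ℕ → M.W) (i : ℕ),
    IsContext M C ∧ π ∈ AT M C ∧ sat M C π i φ

/-- Propositional evaluation: ⊥, ¬, ∧ are interpreted, all other formulas
are treated as propositional atoms evaluated by v. -/
def evalProp (v : F → Prop) : F → Prop
  | .bot => False
  | .neg φ => ¬ evalProp v φ
  | .conj φ ψ => evalProp v φ ∧ evalProp v ψ
  | φ => v φ

/-- φ is a propositional tautology. -/
def Taut (φ : F) : Prop := ∀ v : F → Prop, evalProp v φ

end ConSHN

open ConSHN

namespace ConSHNProof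
open ConSHN

/-! ### Part 1 auxiliary lemmas -/

lemma sat_toF (M : Model) (a : FXY) :
    ∀ (C : Set (Set (ℕ → M.W))) (π : ℕ → M.W) (i : ℕ),
      sat M C π i a.toF ↔ satXY M π i a := by
  induction a <;> intro C π i <;> simp [FXY.toF, sat, satXY, *]

lemma AT_upd (M : Model) (C : Set (Set (ℕ → M.W))) (α : FXY) (i : ℕ) :
    AT M (upd M C α i) = {π' ∈ AT M C | satXY M π' i α} := by
  ext π'
  simp only [AT, upd, Set.sInter_insert, ruleOf, Set.mem_inter_iff,
    Set.mem_setOf_eq, Set.mem_sep_iff]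
  tauto

lemma satXY_top (M : Model) (π : ℕ → M.W) (i : ℕ) : satXY M π i FXY.top := by
  simp [FXY.top, satXY]

lemma AT_upd_top (M : Model) (C : Set (Set (ℕ → M.W))) (i : ℕ) :
    AT M (upd M C FXY.top i) = AT M C := by
  rw [AT_upd]
  ext π'
  simp [satXY_top]

lemma sat_iff (M : Model) (C : Set (Set (ℕ → M.W))) (π : ℕ → M.W) (i : ℕ)
    (φ ψ : F) :
    sat M C π i (F.iff φ ψ) ↔ (sat M C π i φ ↔ sat M C π i ψ) := by
  simp only [F.iff, F.imp, sat]
  tauto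

lemma head_drop_last {t : List ℕ} {x a : ℕ}
    (h : (t ++ [x] ++ [a]).head? = some 0) : (t ++ [x]).head? = some 0 := by
  cases t <;> simpa using h

lemma sat_con_FXY (M : Model) (C : Set (Set (ℕ → M.W))) (π : ℕ → M.W) (i : ℕ)
    (α β : FXY) :
    sat M C π i (F.con α β.toF) ↔
      ∀ π' ∈ AT M C, satXY M π' i α → satXY M π' i β := by
  show (∀ π' ∈ AT M (upd M C α i), sat M (upd M C α i) π' i β.toF) ↔ _
  constructor
  · intro h π' hπ' hα
    have := h π' (by rw [AT_upd]; exact ⟨hπ', hα⟩)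
    rwa [sat_toF] at this
  · intro h π' hπ'
    rw [AT_upd] at hπ'
    rw [sat_toF]
    exact h π' hπ'.1 hπ'.2

lemma sat_box_imp_FXY (M : Model) (C : Set (Set (ℕ → M.W))) (π : ℕ → M.W)
    (i : ℕ) (α β : FXY) :
    sat M C π i (F.box (F.imp α.toF β.toF)) ↔
      ∀ π' ∈ AT M C, satXY M π' i α → satXY M π' i β := by
  show (∀ π' ∈ AT M (upd M C FXY.top i),
      sat M (upd M C FXY.top i) π' i (F.imp α.toF β.toF)) ↔ _
  rw [AT_upd_top]
  refine forall₂_congr fun π' _ => ?_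
  simp [F.imp, sat, sat_toF]

/-! ### Part 2: the counterexample model -/

def myLt (n m : ℕ) : Prop := (n = 0 ∧ (m = 1 ∨ m = 2)) ∨ (0 < n ∧ m = n + 2)

lemma myLt_back {a b w : ℕ} (h1 : myLt a w) (h2 : myLt b w) : a = b := by
  rcases h1 with ⟨h, h'⟩ | ⟨h, h'⟩ <;> rcases h2 with ⟨g, g'⟩ | ⟨g, g'⟩ <;> omega

lemma not_myLt_zero {a : ℕ} (h : myLt a 0) : False := by
  rcases h with ⟨h, h'⟩ | ⟨h, h'⟩ <;> omega

def path : ℕ → List ℕ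
  | 0 => [0]
  | 1 => [0, 1]
  | 2 => [0, 2]
  | (n+3) => path (n+1) ++ [n+3]

lemma path_spec : ∀ m, List.Chain' myLt (path m) ∧
    (path m).head? = some 0 ∧ (path m).getLast? = some m := by
  intro m
  induction m using Nat.strong_induction_on with
  | _ m ih =>
    match m with
    | 0 => refine ⟨?_, rfl, rfl⟩; simp [path, List.Chain']
    | 1 =>
      refine ⟨?_, rfl, rfl⟩
      simp [path, myLt, List.Chain']
    | 2 =>
      refine ⟨?_, rfl, rfl⟩
      simp [path, myLt, List.Chain']
    | (n+3) =>
      obtain ⟨hc, hh, hl⟩ := ih (n+1) (by omega)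
      refine ⟨?_, ?_, ?_⟩
      · rw [path, List.Chain', List.isChain_append]
        refine ⟨hc, List.isChain_singleton _, ?_⟩
        intro x hx y hy
        rw [hl] at hx
        simp at hx hy
        subst hx; subst hy
        right; omega
      · rw [path]
        rcases List.eq_nil_or_concat (path (n+1)) with h | ⟨L, b, h⟩
        · rw [h] at hh; simp at hh
        · cases' hp : path (n+1) with c t
          · rw [hp] at hh; simp at hh
          · rw [hp] at hh
            simp at hh
            subst hh
            rfl
      · rw [path, List.getLast?_concat]

lemma uniq_chain : ∀ l₁ l₂ : List ℕ, List.Chain' myLt l₁ →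
    l₁.head? = some 0 → List.Chain' myLt l₂ → l₂.head? = some 0 →
    l₁.getLast? = l₂.getLast? → l₁ = l₂ := by
  intro l₁
  induction l₁ using List.reverseRecOn with
  | nil =>
    intro l₂ _ hh _ _ _
    simp at hh
  | append_singleton l a ih =>
    intro l₂ hc1 hh1 hc2 hh2 hlast
    rcases List.eq_nil_or_concat l₂ with rfl | ⟨L, b, rfl⟩
    · simp at hh2
    simp only [List.concat_eq_append] at hc2 hh2 hlast ⊢
    rw [List.getLast?_concat, List.getLast?_concat] at hlast
    injection hlast with hab
    subst hab
    rw [List.Chain', List.isChain_append] at hc1 hc2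
    obtain ⟨hcl, -, hstep1⟩ := hc1
    obtain ⟨hcL, -, hstep2⟩ := hc2
    rcases List.eq_nil_or_concat l with rfl | ⟨l', c, rfl⟩
    · -- l = [], so a = 0
      simp at hh1
      subst hh1
      rcases List.eq_nil_or_concat L with rfl | ⟨L', d, rfl⟩
      · rfl
      · simp only [List.concat_eq_append] at hstep2 ⊢
        exfalso
        have := hstep2 d (by simp) 0 rfl
        exact not_myLt_zero this
    · -- l nonempty
      simp only [List.concat_eq_append] at hstep1 hh1 hcl ih ⊢
      rcases List.eq_nil_or_concat L with rfl | ⟨L', d, rfl⟩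
      · exfalso
        simp at hh2
        subst hh2
        have := hstep1 c (by simp) 0 rfl
        exact not_myLt_zero this
      · simp only [List.concat_eq_append] at hstep2 hh2 hcL ⊢
        have h1 : myLt c a := hstep1 c (by simp) a rfl
        have h2 : myLt d a := hstep2 d (by simp) a rfl
        have hcd : c = d := myLt_back h1 h2
        subst hcd
        have key : l' ++ [c] = L' ++ [c] :=
          ih (L' ++ [c]) hcl (head_drop_last hh1) hcL (head_drop_last hh2)
            (by rw [List.getLast?_concat, List.getLast?_concat])
        rw [key]

def M2 : Model where
  W := ℕ
  lt := myLt
  V := fun _ => {1}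
  nonempty := ⟨0⟩
  serial := by
    intro w
    rcases Nat.eq_zero_or_pos w with rfl | h
    · exact ⟨1, Or.inl ⟨rfl, Or.inl rfl⟩⟩
    · exact ⟨w + 2, Or.inr ⟨h, rfl⟩⟩
  root := 0
  reach := by
    intro w
    obtain ⟨hc, hh, hl⟩ := path_spec w
    refine ⟨path w, ⟨hc, hh, hl⟩, ?_⟩
    intro l ⟨h1, h2, h3⟩
    exact uniq_chain l (path w) h1 h2 hc hh (by rw [h3, hl])

def πa : ℕ → ℕ := fun i => if i = 0 then 0 else 2 * i - 1
def πb : ℕ → ℕ := fun i => 2 * i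

lemma πa_tl : πa ∈ Timeline M2 := by
  constructor
  · rfl
  · intro i
    rcases Nat.eq_zero_or_pos i with rfl | h
    · exact Or.inl ⟨rfl, Or.inl rfl⟩
    · have hne : i ≠ 0 := by omega
      right
      refine ⟨?_, ?_⟩ <;> simp only [πa, hne, if_false, Nat.succ_ne_zero] <;> omega

lemma πb_tl : πb ∈ Timeline M2 := by
  constructor
  · rfl
  · intro i
    rcases Nat.eq_zero_or_pos i with rfl | h
    · exact Or.inl ⟨rfl, Or.inr rfl⟩
    · right
      refine ⟨?_, ?_⟩ <;> simp only [πb] <;> omega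

end ConSHNProof

/-- Fact 2: [α]β ↔ □(α → β) is valid for all α, β ∈ Φ_XY, but with α = p and
φ = □p, the formula [p]□p ↔ □(p → □p) is not valid. -/
theorem fact_con_box_equiv_for_FXY_but_not_in_general :
    (∀ α β : FXY, Valid (F.iff (F.con α β.toF) (F.box (F.imp α.toF β.toF)))) ∧
    (∀ p : ℕ,
      ¬ Valid (F.iff (F.con (.atom p) (F.box (F.atom p)))
        (F.box (F.imp (F.atom p) (F.box (F.atom p)))))) := by
  constructor
  · intro α β M C π i _ _
    have h1 := ConSHNProof.sat_con_FXY M C π i α β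
    have h2 := ConSHNProof.sat_box_imp_FXY M C π i α β
    rw [ConSHNProof.sat_iff, h1, h2]
  · intro p hval
    have hctx : IsContext ConSHNProof.M2 (∅ : Set (Set (ℕ → ConSHNProof.M2.W))) :=
      ⟨Set.finite_empty, by simp⟩
    have hmem : ConSHNProof.πa ∈ AT ConSHNProof.M2 ∅ := by
      simp [AT, ConSHNProof.πa_tl]
    have h := hval ConSHNProof.M2 ∅ ConSHNProof.πa 1 hctx hmem
    rw [ConSHNProof.sat_iff ConSHNProof.M2 ∅ ConSHNProof.πa 1] at h
    have hL : sat ConSHNProof.M2 ∅ ConSHNProof.πa 1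
        (F.con (.atom p) (F.box (F.atom p))) := by
      intro π' hπ' π'' hπ''
      rw [ConSHNProof.AT_upd_top, ConSHNProof.AT_upd] at hπ''
      simpa [sat, satXY] using hπ''.2
    have hR := h.mp hL
    have hπa' : ConSHNProof.πa ∈ AT ConSHNProof.M2
        (upd ConSHNProof.M2 ∅ FXY.top 1) := by
      rw [ConSHNProof.AT_upd_top]; exact hmem
    have h2 := hR ConSHNProof.πa hπa'
    simp only [F.imp, sat] at h2
    apply h2
    constructor
    · show ConSHNProof.πa 1 ∈ ConSHNProof.M2.V p
      simp [ConSHNProof.πa, ConSHNProof.M2]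
      rfl
    · intro hbox
      have hπb : ConSHNProof.πb ∈ AT ConSHNProof.M2
          (upd ConSHNProof.M2 (upd ConSHNProof.M2 ∅ FXY.top 1) FXY.top 1) := by
        rw [ConSHNProof.AT_upd_top, ConSHNProof.AT_upd_top]
        simp [AT, ConSHNProof.πb_tl]
      have := hbox ConSHNProof.πb hπb
      simp [sat, ConSHNProof.πb, ConSHNProof.M2] at this
      exact (by decide : (2 : ℕ) ≠ 1) (this : (2 : ℕ) = 1)
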